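/- Let L be a first-order language whose theory under consideration has Skolem functions (every substructure of a model is an elementary substructure). Let δ be an ordinal and (N_α : α ≤ δ) an increasing continuous elementary chain of L-structures with N_δ = ⋃_{α<δ} N_α, such that for each α < δ, N_{α+1} is the substructure generated by N_α ∪ {a_α} for some element a_α. Suppose there is a map assigning to each L-formula φ(x, ȳ) an L-formula ψ_φ(ȳ) without parameters such that for every α < δ and every finite tuple b̄ from N_α, N_{α+1} ⊨ φ(a_α, b̄) iff N_α ⊨ ψ_φ(b̄). Then for every subset X of N_δ definable in N_δ by a formula with parameters from N_δ, and every α < δ, the set X ∩ N_α is definable in N_α by a formula with parameters from N_α. -/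

import Mathlib

open FirstOrder

variable {L : FirstOrder.Language} {M : Type*} [L.Structure M]

/-- `S` is the carrier of an elementary substructure of the ambient structure `M`. -/
def IsElementaryCarrier (S : Set M) : Prop :=
  ∃ E : L.ElementarySubstructure M, (E : Set M) = S

private theorem formula_realize_subst {α β : Type*} {φ : L.Formula α} {tf : α → L.Term β}
    {v : β → M} : Language.Formula.Realize (φ.subst tf) v ↔
      φ.Realize (fun a => (tf a).realize v) :=
  Language.BoundedFormula.realize_subst

/-- Let `(N_α : α ≤ δ)` be an increasing continuous elementary chain (of carriers `A α`
inside the ambient structure `M = N_δ`) for a theory with Skolem functions, where each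
`N_{α+1}` is generated by `N_α ∪ {a_α}` and `N_δ = ⋃_{α<δ} N_α`.  Suppose the type of each
`a_α` over `N_α` is uniformly definable without parameters: there is `φ ↦ ψ_φ` such that for
all `α < δ` and all tuples `b̄` from `N_α`, `φ(a_α, b̄)` holds iff `ψ_φ(b̄)` holds.  Then for
every subset `X` of `N_δ` definable with parameters and every `α < δ`, the set `X ∩ N_α` is
definable in `N_α` by a formula with parameters from `N_α`. -/
theorem inter_definable_of_definable_chain
    (hSkolem : ∀ S : L.Substructure M, S.IsElementary)
    (δ : Ordinal) (A : Ordinal → Set M) (a : Ordinal → M)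
    (hmono : ∀ i j : Ordinal, i ≤ j → j ≤ δ → A i ⊆ A j)
    (hcont : ∀ j : Ordinal, j ≤ δ → Order.IsSuccLimit j → A j = ⋃ i ∈ Set.Iio j, A i)
    (htop : A δ = Set.univ)
    (hδ : A δ = ⋃ i ∈ Set.Iio δ, A i)
    (helem : ∀ i ≤ δ, IsElementaryCarrier (L := L) (A i))
    (hsucc : ∀ i < δ,
      (FirstOrder.Language.Substructure.closure L (A i ∪ {a i}) : Set M) = A (i + 1))
    (Ψ : ∀ n : ℕ, L.Formula (Fin 1 ⊕ Fin n) → L.Formula (Fin n))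
    (hΨ : ∀ i < δ, ∀ (n : ℕ) (φ : L.Formula (Fin 1 ⊕ Fin n)) (b : Fin n → M),
      (∀ j, b j ∈ A i) →
      (φ.Realize (Sum.elim (fun _ => a i) b) ↔ (Ψ n φ).Realize b)) :
    ∀ (m : ℕ) (χ : L.Formula (Fin 1 ⊕ Fin m)) (c : Fin m → M), ∀ i < δ,
      ∃ (m' : ℕ) (χ' : L.Formula (Fin 1 ⊕ Fin m')) (c' : Fin m' → M),
        (∀ j, c' j ∈ A i) ∧
        ∀ x ∈ A i,
          (χ.Realize (Sum.elim (fun _ => x) c) ↔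
            χ'.Realize (Sum.elim (fun _ => x) c')) := by
  classical
  intro m χ c i hiδ
  by_cases hA : (A i).Nonempty
  · obtain ⟨m0, hm0⟩ := hA
    -- Main claim, by transfinite induction on the level β containing the parameters.
    have key : ∀ β : Ordinal, β ≤ δ →
        ∀ (m : ℕ) (χ : L.Formula (Fin 1 ⊕ Fin m)) (c : Fin m → M),
        (∀ j, c j ∈ A β) → i ≤ β →
        ∃ (m' : ℕ) (χ' : L.Formula (Fin 1 ⊕ Fin m')) (c' : Fin m' → M),
          (∀ j, c' j ∈ A i) ∧
          ∀ x ∈ A i,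
            (χ.Realize (Sum.elim (fun _ => x) c) ↔
              χ'.Realize (Sum.elim (fun _ => x) c')) := by
      intro β
      induction β using Ordinal.induction with
      | h β IH =>
      intro hβδ m χ c hc hiβ
      rcases eq_or_lt_of_le hiβ with rfl | hiβ'
      · exact ⟨m, χ, c, hc, fun x _ => Iff.rfl⟩
      rcases Ordinal.zero_or_succ_or_isSuccLimit β with rfl | ⟨γ, rfl⟩ | hlim
      · exact absurd hiβ' (zero_le (a := i)).not_gt
      · -- successor case
        have hγδ : γ < δ := lt_of_lt_of_le (Order.lt_succ γ) hβδ
        have hiγ : i ≤ γ := Order.lt_succ_iff.1 hiβ'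
        have hm0γ : m0 ∈ A γ := hmono i γ hiγ hγδ.le hm0
        -- parameters are realized by terms over A γ ∪ {a γ}
        have hc' : ∀ j, c j ∈ Language.Substructure.closure L (A γ ∪ {a γ}) := by
          intro j
          have := hc j
          have h2 := hsucc γ hγδ
          rw [Ordinal.add_one_eq_succ] at h2
          rw [← h2] at this
          exact this
        set S := ↥(A γ ∪ {a γ})
        choose t ht using fun j => (Language.Substructure.mem_closure_iff_exists_term).1 (hc' j)
        set F : Finset S := Finset.univ.biUnion (fun j : Fin m => (t j).varFinset) with hF
        have hsub : ∀ j, ((t j).varFinset : Set S) ⊆ (F : Set S) := fun j => by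
          rw [hF]
          exact Finset.coe_subset.2
            (Finset.subset_biUnion_of_mem (fun j => (t j).varFinset) (Finset.mem_univ j))
        set n' := F.card
        set e : {x // x ∈ F} ≃ Fin n' := F.equivFin with he
        set d : Fin n' → M := fun k =>
          if ((e.symm k : S) : M) ∈ A γ then ((e.symm k : S) : M) else m0 with hd
        have hdγ : ∀ k, d k ∈ A γ := by
          intro k
          by_cases h : ((e.symm k : S) : M) ∈ A γ <;> simp [hd, h, hm0γ]
        set r : ↥((F : Set S)) → Fin 1 ⊕ Fin (n' + 1) := fun s =>
          if (s : S).1 ∈ A γ then Sum.inr (Fin.succ (e ⟨(s : S), Finset.mem_coe.1 s.2⟩))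
          else Sum.inl 0 with hr
        set σ : Fin 1 ⊕ Fin m → L.Term (Fin 1 ⊕ Fin (n' + 1)) :=
          Sum.elim (fun _ => Language.Term.var (Sum.inr 0))
            (fun j => ((t j).restrictVar (Set.inclusion (hsub j))).relabel r) with hσ
        set φ : L.Formula (Fin 1 ⊕ Fin (n' + 1)) := χ.subst σ with hφ
        set ψ' : L.Formula (Fin 1 ⊕ Fin n') :=
          (Ψ (n' + 1) φ).relabel
            (fun k => Fin.cases (Sum.inl 0) (fun k' => Sum.inr k') k) with hψ'
        obtain ⟨m', χ', c', hc'', hiff⟩ := IH γ (Order.lt_succ γ)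
          (le_of_lt hγδ) n' ψ' d hdγ hiγ
        refine ⟨m', χ', c', hc'', fun x hx => ?_⟩
        have hxγ : x ∈ A γ := hmono i γ hiγ hγδ.le hx
        set b : Fin (n' + 1) → M := Fin.cons x d with hb
        have hbγ : ∀ k, b k ∈ A γ := by
          intro k
          refine Fin.cases ?_ ?_ k
          · simpa [hb] using hxγ
          · intro k'; simpa [hb] using hdγ k'
        set w : Fin 1 ⊕ Fin (n' + 1) → M := Sum.elim (fun _ => a γ) b with hw
        have hkey : ∀ s : ↥((F : Set S)), w (r s) = ((s : S) : M) := by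
          intro s
          by_cases h : ((s : S) : M) ∈ A γ
          · simp only [hr, h, if_true, hw, Sum.elim_inr, hb, Fin.cons_succ, hd]
            rw [Equiv.symm_apply_apply]
            simp [h]
          · have hmem : ((s : S) : M) ∈ A γ ∪ {a γ} := (s : S).2
            rcases hmem with h' | h'
            · exact absurd h' h
            · simp only [Set.mem_singleton_iff] at h'
              simp only [hr, if_neg h, hw, Sum.elim_inl]
              exact h'.symm
        have hterm : ∀ j, (σ (Sum.inr j)).realize w = c j := by
          intro j
          simp only [hσ, Sum.elim_inr, Language.Term.realize_relabel]
          have : w ∘ r = (fun (s : S) => (s : M)) ∘ (Subtype.val :  ↥((F : Set S)) → S) := by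
            funext s
            exact hkey s
          rw [this, Language.Term.realize_restrictVar' (hsub j)]
          exact ht j
        have step1 : χ.Realize (Sum.elim (fun _ => x) c) ↔ φ.Realize w := by
          have hfun : (fun p => Language.Term.realize w (σ p)) = Sum.elim (fun _ => x) c := by
            funext p
            rcases p with k | j
            · simp [hσ, hw, hb]
            · simpa using hterm j
          rw [hφ, formula_realize_subst, hfun]
        have step2 : φ.Realize w ↔ (Ψ (n' + 1) φ).Realize b :=
          hΨ γ hγδ (n' + 1) φ b hbγ
        have step3 : (Ψ (n' + 1) φ).Realize b ↔ ψ'.Realize (Sum.elim (fun _ => x) d) := by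
          have hfun2 : (Sum.elim (fun (_ : Fin 1) => x) d) ∘
              (fun k : Fin (n' + 1) => Fin.cases (Sum.inl 0) (fun k' => Sum.inr k') k) = b := by
            funext k
            refine Fin.cases ?_ ?_ k <;> simp [hb]
          rw [hψ', Language.Formula.realize_relabel, hfun2]
        exact (step1.trans (step2.trans (step3.trans (hiff x hx))))
      · -- limit case
        have hβ0 : (⊥ : Ordinal) < β := by
          rw [Ordinal.bot_eq_zero]
          exact hlim.pos
        have hc' : ∀ j, ∃ γ, γ < β ∧ c j ∈ A γ := by
          intro j
          have := hc j
          rw [hcont β hβδ hlim] at this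
          simpa using this
        choose g hg₁ hg₂ using hc'
        set γ : Ordinal := max i (Finset.univ.sup g) with hγ
        have hγβ : γ < β := by
          rw [hγ, max_lt_iff]
          exact ⟨hiβ', (Finset.sup_lt_iff hβ0).2 fun j _ => hg₁ j⟩
        have hγδ : γ ≤ δ := le_of_lt (lt_of_lt_of_le hγβ hβδ)
        refine IH γ hγβ hγδ m χ c (fun j => hmono (g j) γ ?_ hγδ (hg₂ j)) (le_max_left _ _)
        exact le_trans (Finset.le_sup (Finset.mem_univ j)) (le_max_right _ _)
    have hcδ : ∀ j, c j ∈ A δ := by rw [htop]; exact fun j => Set.mem_univ _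
    exact key δ le_rfl m χ c hcδ hiδ.le
  · refine ⟨0, ⊥, Fin.elim0, fun j => j.elim0, fun x hx => absurd ⟨x, hx⟩ hA⟩
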